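/- Let (X,d) be a metric space with at least two points, and define for each pair of distinct points x,y ∈ X and each α ∈ X \ {x,y} the semi-metrics d_{(y,α,x)} and d_{(x,α,y)} by the formula d_{(ω,α,β)}(u,v) = (d(u,v)/(d(u,ω)d(ω,v)))·(d(α,ω)d(ω,β)/d(α,β)). Then d_{(y,α,x)}(x,z)·d_{(x,α,y)}(y,z) = 1 for all z ∈ X \ {x,y}, and consequently the balls B_{(y,α,x),1}(x) and B_{(x,α,y),1}(y) are disjoint; hence the Möbius topology is Hausdorff. -/

import Mathlib

open ENNReal

noncomputable section

/-- The semi-metric `d_A` associated to a triple `A = (ω,α,β)` in a metric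
space, valued in `ℝ≥0∞` with the convention `a/0 = ∞` for `a > 0`. -/
def dTriple {X : Type*} [MetricSpace X] (ω α β x y : X) : ℝ≥0∞ :=
  (ENNReal.ofReal (dist x y) / (ENNReal.ofReal (dist x ω) * ENNReal.ofReal (dist ω y))) *
    (ENNReal.ofReal (dist α ω) * ENNReal.ofReal (dist ω β) / ENNReal.ofReal (dist α β))

lemma dTriple_symm {X : Type*} [MetricSpace X] (ω α β x y : X) :
    dTriple ω α β x y = dTriple ω α β y x := by
  unfold dTriple
  rw [dist_comm x y, dist_comm x ω, dist_comm ω y, mul_comm (ENNReal.ofReal (dist ω x))]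

lemma dTriple_eq {X : Type*} [MetricSpace X] (ω α β x y : X)
    (h1 : 0 < dist x ω) (h2 : 0 < dist ω y) (h3 : 0 < dist α β) :
    dTriple ω α β x y =
      ENNReal.ofReal (dist x y / (dist x ω * dist ω y) * (dist α ω * dist ω β / dist α β)) := by
  unfold dTriple
  rw [← ENNReal.ofReal_mul h1.le, ← ENNReal.ofReal_mul dist_nonneg,
    ← ENNReal.ofReal_div_of_pos (mul_pos h1 h2), ← ENNReal.ofReal_div_of_pos h3,
    ← ENNReal.ofReal_mul (by positivity)]

lemma dTriple_top {X : Type*} [MetricSpace X] (ω α β y : X)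
    (hωy : ω ≠ y) (hαω : α ≠ ω) (hωβ : ω ≠ β) :
    dTriple ω α β ω y = ⊤ := by
  unfold dTriple
  rw [dist_self, ENNReal.ofReal_zero, zero_mul, ENNReal.div_zero
    (by simpa [ENNReal.ofReal_eq_zero, not_le] using dist_pos.2 hωy)]
  rw [ENNReal.top_mul]
  refine ENNReal.div_ne_zero.2 ⟨?_, ENNReal.ofReal_ne_top⟩
  simp [mul_eq_zero, ENNReal.ofReal_eq_zero, not_le, dist_pos, hαω, hωβ]

theorem mobius_hausdorff_separation {X : Type*} [MetricSpace X]
    (x y α : X) (hxy : x ≠ y) (hαx : α ≠ x) (hαy : α ≠ y) :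
    (∀ z : X, z ≠ x → z ≠ y →
      dTriple y α x x z * dTriple x α y y z = 1) ∧
    Disjoint {u : X | dTriple y α x u x < 1} {u : X | dTriple x α y u y < 1} := by
  have key : ∀ z : X, z ≠ x → z ≠ y →
      dTriple y α x x z * dTriple x α y y z = 1 := by
    intro z hzx hzy
    have hxz : 0 < dist x z := dist_pos.2 (Ne.symm hzx)
    have hyz : 0 < dist y z := dist_pos.2 (Ne.symm hzy)
    have hxy' : 0 < dist x y := dist_pos.2 hxy
    have hyx : 0 < dist y x := dist_pos.2 hxy.symm
    have hax : 0 < dist α x := dist_pos.2 hαx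
    have hay : 0 < dist α y := dist_pos.2 hαy
    rw [dTriple_eq _ _ _ _ _ hxy' hyz hax, dTriple_eq _ _ _ _ _ hyx hxz hay,
      ← ENNReal.ofReal_mul (by positivity), ← ENNReal.ofReal_one]
    congr 1
    rw [dist_comm y x]
    field_simp
  refine ⟨key, ?_⟩
  rw [Set.disjoint_left]
  intro u hu1 hu2
  simp only [Set.mem_setOf_eq] at hu1 hu2
  rcases eq_or_ne u x with rfl | hux
  · rw [dTriple_top _ _ _ _ hxy hαx hxy.symm.symm] at hu2
    · exact absurd hu2 (by simp)
  · rcases eq_or_ne u y with rfl | huy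
    · rw [dTriple_top _ _ _ _ hxy.symm hαy hxy.symm] at hu1
      exact absurd hu1 (by simp)
    · have h := key u hux huy
      rw [dTriple_symm] at hu1 hu2
      have : dTriple y α x x u * dTriple x α y y u < 1 := by
        calc dTriple y α x x u * dTriple x α y y u
            ≤ dTriple y α x x u * 1 := mul_le_mul' le_rfl hu2.le
          _ = dTriple y α x x u := mul_one _
          _ < 1 := hu1
      exact absurd h this.ne
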